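/- Let H = {g₁,...,g_k} be self-maps of a projective variety X over K with g_j*L ≅ L^{⊗d_j}, d_j ≥ 2, L ample. Then for any positive integer D, the set of points x ∈ X(K̄) with [K(x):K] ≤ D that are preperiodic for some sequence of maps drawn from H is finite. -/

import Mathlib

/-- `seqComp φ m = φ_{m-1} ∘ ... ∘ φ_0` (with `seqComp φ 0 = id`). -/
def seqComp {X : Type*} (φ : ℕ → X → X) : ℕ → X → X
  | 0 => id
  | n + 1 => φ n ∘ seqComp φ n

/-- For self-maps `g₁,...,g_k` of a projective variety with `g_j*L ≅ L^{⊗d_j}`, `d_j ≥ 2`,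
`L` ample (encoded by the height bound and the Northcott property in bounded degree),
and any `D ≥ 1`, the set of points of degree at most `D` over `K` that are preperiodic
for some sequence of maps drawn from `{g₁,...,g_k}` is finite. -/
theorem finite_preperiodic_points_semigroup {X : Type*} (k : ℕ) (hk : 0 < k)
    (h : X → ℝ) (degK : X → ℕ)
    (g : Fin k → X → X) (d : Fin k → ℕ) (hd : ∀ j, 2 ≤ d j)
    (c : ℝ) (hc : ∀ j (x : X), |h (g j x) / (d j : ℝ) - h x| ≤ c)
    (D : ℕ) (hD : 0 < D)
    (hNorthcott : ∀ C : ℝ, {x : X | degK x ≤ D ∧ h x ≤ C}.Finite) :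
    {x : X | degK x ≤ D ∧
      ∃ w : ℕ → Fin k, (Set.range fun n => seqComp (fun i => g (w i)) n x).Finite}.Finite := by
  apply (hNorthcott (2 * c)).subset
  rintro x ⟨hdeg, w, hfin⟩
  refine ⟨hdeg, ?_⟩
  by_contra hx
  push_neg at hx
  set ε := h x - 2 * c with hε
  have hεpos : 0 < ε := by simp only [hε]; linarith
  have hc0 : 0 ≤ c := le_trans (abs_nonneg _) (hc ⟨0, hk⟩ x)
  set F := fun n => seqComp (fun i => g (w i)) n x with hF
  have key : ∀ n : ℕ, h x + n * ε ≤ h (F n) := by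
    intro n
    induction n with
    | zero => simp [hF, seqComp]
    | succ n ih =>
      have hstep := (abs_le.mp (hc (w n) (F n))).1
      have hd2 : (2 : ℝ) ≤ d (w n) := by exact_mod_cast hd (w n)
      have hdpos : (0 : ℝ) < d (w n) := by linarith
      have hnn : (0 : ℝ) ≤ n * ε := mul_nonneg (Nat.cast_nonneg n) hεpos.le
      have hdiv : (d (w n) : ℝ) * (h (F n) - c) ≤ h (g (w n) (F n)) := by
        rw [mul_comm]
        exact (le_div_iff₀ hdpos).mp (by linarith)
      have h2 : 2 * (h (F n) - c) ≤ (d (w n) : ℝ) * (h (F n) - c) :=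
        mul_le_mul_of_nonneg_right hd2 (by linarith)
      have hFn1 : h (F (n + 1)) = h (g (w n) (F n)) := rfl
      rw [hFn1]
      push_cast
      nlinarith
  have hbd : ∃ M, ∀ n, h (F n) ≤ M := by
    obtain ⟨M, hM⟩ := (hfin.image h).bddAbove
    exact ⟨M, fun n => hM ⟨F n, ⟨n, rfl⟩, rfl⟩⟩
  obtain ⟨M, hM⟩ := hbd
  obtain ⟨n, hn⟩ := exists_nat_gt ((M - h x) / ε)
  have h1 := key n
  have h2 := hM n
  have h3 : (M - h x) / ε * ε < n * ε := mul_lt_mul_of_pos_right hn hεpos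
  rw [div_mul_cancel₀ _ hεpos.ne'] at h3
  linarith
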